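/- arXiv:1808.06756 — 2 statements merged into one kernel-verified Lean document; each statement's English description precedes it below -/
import Mathlib

section
/- Let r > 1, K = (r − r⁻¹)², f = diag(r, r⁻¹), and let g₀ = g be a 2×2 matrix over ℝ (or ℂ) with determinant 1. Define g_{m+1} = g_m f g_m⁻¹, writing g_m = [[a_m, b_m],[c_m, d_m]]. Then each g_m has determinant 1 and the products w_m = b_m c_m satisfy the recursion w_{m+1} = −K (1 + w_m) w_m. -/
open Matrix

theorem stmt2 (r : ℝ) (hr : 1 < r) (K : ℝ) (hK : K = (r - r⁻¹) ^ 2)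
    (g : ℕ → Matrix (Fin 2) (Fin 2) ℝ)
    (hdet0 : (g 0).det = 1)
    (hrec : ∀ m, g (m + 1) = g m * (!![r, 0; 0, r⁻¹] : Matrix (Fin 2) (Fin 2) ℝ) * (g m)⁻¹)
    (w : ℕ → ℝ) (hw : ∀ m, w m = g m 0 1 * g m 1 0) :
    ∀ m, (g m).det = 1 ∧ w (m + 1) = -K * (1 + w m) * w m := by
  have hr0 : r ≠ 0 := by positivity
  have hf : (!![r, 0; 0, r⁻¹] : Matrix (Fin 2) (Fin 2) ℝ).det = 1 := by
    simp [Matrix.det_fin_two_of]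
    field_simp
  have hdet : ∀ m, (g m).det = 1 := by
    intro m
    induction m with
    | zero => exact hdet0
    | succ n ih =>
      rw [hrec n, Matrix.det_mul, Matrix.det_mul, ih, hf, Matrix.det_nonsing_inv, ih]
      norm_num
  intro m
  refine ⟨hdet m, ?_⟩
  have hinv : (g m)⁻¹ = !![g m 1 1, -(g m 0 1); -(g m 1 0), g m 0 0] := by
    rw [Matrix.inv_def, Matrix.adjugate_fin_two (g m), hdet m]
    simp [← Matrix.smul_of]
  have had : g m 0 0 * g m 1 1 - g m 0 1 * g m 1 0 = 1 := by
    have := hdet m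
    rwa [Matrix.det_fin_two] at this
  rw [hw (m+1), hw m, hrec m, hinv]
  simp [Matrix.mul_apply, Fin.sum_univ_two]
  rw [hK]
  linear_combination (-(r - r⁻¹) ^ 2 * g m 0 1 * g m 1 0) * had
end

section
/- Let 0 < K and let (w_m) be a sequence of real numbers with w_{m+1} = −K(1 + w_m)·w_m for all m, K(1 + |w_0|) = 1, and K(1 + |w_m|) ≥ 1 for all m. Then K(1 + |w_m|) = 1 for all m. -/
theorem stmt4 (K : ℝ) (hK : 0 < K) (w : ℕ → ℝ)
    (hrec : ∀ m, w (m + 1) = -K * (1 + w m) * w m)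
    (h0 : K * (1 + |w 0|) = 1)
    (hge : ∀ m, 1 ≤ K * (1 + |w m|)) :
    ∀ m, K * (1 + |w m|) = 1 := by
  intro m
  induction m with
  | zero => exact h0
  | succ n ih =>
    have habs : |1 + w n| ≤ 1 + |w n| := by
      calc |1 + w n| ≤ |(1:ℝ)| + |w n| := abs_add_le 1 (w n)
        _ = 1 + |w n| := by rw [abs_one]
    have h1 : |w (n + 1)| ≤ |w n| := by
      rw [hrec, abs_mul, abs_mul, abs_neg, abs_of_pos hK]
      nlinarith [abs_nonneg (w n), mul_nonneg (mul_nonneg hK.le (abs_nonneg (w n))) (sub_nonneg.mpr habs)]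
    have h2 : K * (1 + |w (n + 1)|) ≤ 1 := by nlinarith
    linarith [hge (n + 1)]
end
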